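/- Suppose 1 < j ≤ k < n, ρ(k+1) ≤ j(k+1-j), ρ < min(j, n-j), and let P be a probability distribution on j-subsets of [n] such that the total weight P assigns to the ball B_ρ(v) = {w : |w ∩ v| ≥ j - ρ} is at least α. Then there exists a k-subset C with π_P(C) ≥ α · C(k-j, ρ)/C(n-j, ρ). -/

import Mathlib

open Finset

lemma count_supersets {n k : ℕ} (s : Finset (Fin n)) (hs : s.card ≤ k) :
    (((univ : Finset (Fin n)).powersetCard k).filter (fun C => s ⊆ C)).card
      = (n - s.card).choose (k - s.card) := by
  have h1 : ((univ \ s : Finset (Fin n)).powersetCard (k - s.card)).card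
      = (n - s.card).choose (k - s.card) := by
    rw [Finset.card_powersetCard, Finset.card_sdiff_of_subset (Finset.subset_univ s),
      Finset.card_univ, Fintype.card_fin]
  rw [← h1]
  apply Finset.card_nbij' (fun C => C \ s) (fun D => D ∪ s)
  · intro C hC
    simp only [Finset.mem_coe, Finset.mem_filter, Finset.mem_powersetCard_univ] at hC
    simp only [Finset.mem_coe, Finset.mem_powersetCard]
    constructor
    · exact Finset.sdiff_subset_sdiff (Finset.subset_univ _) subset_rfl
    · rw [Finset.card_sdiff_of_subset hC.2, hC.1]
  · intro D hD
    rw [Finset.mem_coe, Finset.mem_powersetCard] at hD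
    have hdisj : Disjoint D s := by
      intro u huD hus x hx
      have := hD.1 (huD hx)
      simp only [Finset.mem_sdiff] at this
      exact absurd (hus hx) this.2
    simp only [Finset.mem_coe, Finset.mem_filter, Finset.mem_powersetCard_univ]
    constructor
    · rw [Finset.card_union_of_disjoint hdisj, hD.2]
      omega
    · exact Finset.subset_union_right
  · intro C hC
    simp only [Finset.mem_coe, Finset.mem_filter, Finset.mem_powersetCard_univ] at hC
    exact Finset.sdiff_union_of_subset hC.2
  · intro D hD
    rw [Finset.mem_coe, Finset.mem_powersetCard] at hD
    have hdisj : Disjoint D s := by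
      intro u huD hus x hx
      have := hD.1 (huD hx)
      simp only [Finset.mem_sdiff] at this
      exact absurd (hus hx) this.2
    exact Finset.union_sdiff_cancel_right hdisj

theorem corollary_partial_ball (n j k ρ : ℕ) (hj : 1 < j) (hjk : j ≤ k) (hkn : k < n)
    (hρ : ρ * (k + 1) ≤ j * (k + 1 - j)) (hρD : ρ < min j (n - j))
    (v : Finset (Fin n)) (hv : v.card = j) (α : ℝ) (hα0 : 0 ≤ α) (hα1 : α ≤ 1)
    (P : Finset (Fin n) → ℝ) (hP0 : ∀ ℓ, 0 ≤ P ℓ)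
    (hP1 : ∑ ℓ ∈ (univ : Finset (Fin n)).powersetCard j, P ℓ = 1)
    (hball : α ≤ ∑ ℓ ∈ ((univ : Finset (Fin n)).powersetCard j).filter
        (fun ℓ => j - ρ ≤ (ℓ ∩ v).card), P ℓ) :
    ∃ C ∈ (univ : Finset (Fin n)).powersetCard k,
      α * (((k - j).choose ρ : ℝ) / ((n - j).choose ρ : ℝ))
        ≤ ∑ ℓ ∈ C.powersetCard j, P ℓ := by
  have hρj : ρ < j := lt_of_lt_of_le hρD (min_le_left _ _)
  have hρnj : ρ < n - j := lt_of_lt_of_le hρD (min_le_right _ _)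
  have hvk : v.card ≤ k := by rw [hv]; exact hjk
  have hkuniv : k ≤ (univ : Finset (Fin n)).card := by
    rw [Finset.card_univ, Fintype.card_fin]; omega
  by_cases hkj : k - j < ρ
  · -- trivial case: the binomial coefficient is zero
    obtain ⟨C, hvC, -, hCcard⟩ :=
      Finset.exists_subsuperset_card_eq (Finset.subset_univ v) hvk hkuniv
    refine ⟨C, Finset.mem_powersetCard_univ.mpr hCcard, ?_⟩
    rw [Nat.choose_eq_zero_of_lt hkj]
    have h0 : α * (((0 : ℕ) : ℝ) / ((n - j).choose ρ : ℝ)) = 0 := by simp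
    rw [h0]
    exact Finset.sum_nonneg fun ℓ _ => hP0 ℓ
  push_neg at hkj
  -- main case: ρ ≤ k - j
  set T := ((univ : Finset (Fin n)).powersetCard k).filter (fun C => v ⊆ C) with hTdef
  have hTcard : T.card = (n - j).choose (k - j) := by
    rw [hTdef, count_supersets v hvk, hv]
  set ball := ((univ : Finset (Fin n)).powersetCard j).filter
      (fun ℓ => j - ρ ≤ (ℓ ∩ v).card) with hballdef
  set m := (n - j - ρ).choose (n - k) with hmdef
  -- rewrite the double sum
  have hswap : ∑ C ∈ T, ∑ ℓ ∈ C.powersetCard j, P ℓ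
      = ∑ ℓ ∈ (univ : Finset (Fin n)).powersetCard j,
          P ℓ * ((T.filter (fun C => ℓ ⊆ C)).card : ℝ) := by
    have hinner : ∀ C ∈ T, ∑ ℓ ∈ C.powersetCard j, P ℓ
        = ∑ ℓ ∈ (univ : Finset (Fin n)).powersetCard j, if ℓ ⊆ C then P ℓ else 0 := by
      intro C _
      rw [← Finset.sum_filter]
      congr 1
      ext ℓ
      simp only [Finset.mem_powersetCard, Finset.mem_filter, Finset.mem_powersetCard_univ,
        Finset.subset_univ, true_and]
      tauto
    rw [Finset.sum_congr rfl hinner, Finset.sum_comm]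
    refine Finset.sum_congr rfl fun ℓ _ => ?_
    rw [← Finset.sum_filter, Finset.sum_const, nsmul_eq_mul, mul_comm]
  -- per-element count lower bound on the ball
  have hcount : ∀ ℓ ∈ ball, (m : ℝ) ≤ ((T.filter (fun C => ℓ ⊆ C)).card : ℝ) := by
    intro ℓ hℓ
    rw [hballdef, Finset.mem_filter, Finset.mem_powersetCard_univ] at hℓ
    obtain ⟨hℓcard, hℓball⟩ := hℓ
    have hfilter : T.filter (fun C => ℓ ⊆ C)
        = ((univ : Finset (Fin n)).powersetCard k).filter (fun C => (v ∪ ℓ) ⊆ C) := by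
      rw [hTdef, Finset.filter_filter]
      refine Finset.filter_congr fun C _ => ?_
      simp only [Finset.union_subset_iff]
    have hcup : (v ∪ ℓ).card + (v ∩ ℓ).card = j + j := by
      rw [Finset.card_union_add_card_inter, hv, hℓcard]
    have hinter : (v ∩ ℓ).card = (ℓ ∩ v).card := by rw [Finset.inter_comm]
    have hcle : (v ∪ ℓ).card ≤ j + ρ := by omega
    have hck : (v ∪ ℓ).card ≤ k := by omega
    rw [hfilter, count_supersets _ hck]
    have hsymm : (n - (v ∪ ℓ).card).choose (k - (v ∪ ℓ).card)
        = (n - (v ∪ ℓ).card).choose (n - k) := by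
      have h1 : k - (v ∪ ℓ).card ≤ n - (v ∪ ℓ).card := by omega
      have h2 : (n - (v ∪ ℓ).card) - (k - (v ∪ ℓ).card) = n - k := by omega
      rw [← Nat.choose_symm h1, h2]
    rw [hsymm]
    have : m ≤ (n - (v ∪ ℓ).card).choose (n - k) := by
      rw [hmdef]
      exact Nat.choose_le_choose _ (by omega)
    exact_mod_cast this
  -- lower bound for the total sum
  have hlb : α * (m : ℝ) ≤ ∑ C ∈ T, ∑ ℓ ∈ C.powersetCard j, P ℓ := by
    rw [hswap]
    have step1 : ∑ ℓ ∈ ball, P ℓ * ((T.filter (fun C => ℓ ⊆ C)).card : ℝ)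
        ≤ ∑ ℓ ∈ (univ : Finset (Fin n)).powersetCard j,
            P ℓ * ((T.filter (fun C => ℓ ⊆ C)).card : ℝ) := by
      apply Finset.sum_le_sum_of_subset_of_nonneg (Finset.filter_subset _ _)
      intro ℓ _ _
      exact mul_nonneg (hP0 ℓ) (Nat.cast_nonneg _)
    have step2 : ∑ ℓ ∈ ball, P ℓ * (m : ℝ)
        ≤ ∑ ℓ ∈ ball, P ℓ * ((T.filter (fun C => ℓ ⊆ C)).card : ℝ) := by
      refine Finset.sum_le_sum fun ℓ hℓ => ?_
      exact mul_le_mul_of_nonneg_left (hcount ℓ hℓ) (hP0 ℓ)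
    have step3 : α * (m : ℝ) ≤ ∑ ℓ ∈ ball, P ℓ * (m : ℝ) := by
      rw [← Finset.sum_mul]
      exact mul_le_mul_of_nonneg_right hball (Nat.cast_nonneg _)
    linarith
  -- T is nonempty
  have hTne : T.Nonempty := by
    obtain ⟨C, hvC, -, hCcard⟩ :=
      Finset.exists_subsuperset_card_eq (Finset.subset_univ v) hvk hkuniv
    exact ⟨C, by rw [hTdef, Finset.mem_filter, Finset.mem_powersetCard_univ]; exact ⟨hCcard, hvC⟩⟩
  have hTcpos : 0 < (T.card : ℝ) := by
    have := Finset.card_pos.mpr hTne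
    exact_mod_cast this
  -- extract one good C by averaging
  have havg : ∑ C ∈ T, (α * (m : ℝ) / (T.card : ℝ))
      ≤ ∑ C ∈ T, ∑ ℓ ∈ C.powersetCard j, P ℓ := by
    rw [Finset.sum_const, nsmul_eq_mul]
    rw [mul_div_assoc']
    rw [mul_comm (T.card : ℝ) _, mul_div_assoc, div_self (ne_of_gt hTcpos), mul_one]
    exact hlb
  obtain ⟨C, hCT, hC⟩ := Finset.exists_le_of_sum_le hTne havg
  have hCmem : C ∈ (univ : Finset (Fin n)).powersetCard k := by
    rw [hTdef, Finset.mem_filter] at hCT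
    exact hCT.1
  refine ⟨C, hCmem, le_trans ?_ hC⟩
  -- final identity: m / |T| = C(k-j,ρ)/C(n-j,ρ)
  have hDpos : 0 < ((n - j).choose ρ : ℝ) := by
    exact_mod_cast Nat.choose_pos (by omega)
  have hnat : m * (n - j).choose ρ = (k - j).choose ρ * (n - j).choose (k - j) := by
    have hid := Nat.choose_mul (n := n - j) (k := k - j) (s := ρ) hkj
    have hsymm : m = (n - j - ρ).choose (k - j - ρ) := by
      rw [hmdef]
      have h1 : k - j - ρ ≤ n - j - ρ := by omega
      have h2 : (n - j - ρ) - (k - j - ρ) = n - k := by omega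
      rw [← Nat.choose_symm h1, h2]
    rw [hsymm, Nat.mul_comm ((n - j - ρ).choose (k - j - ρ)) ((n - j).choose ρ),
      Nat.mul_comm ((k - j).choose ρ) ((n - j).choose (k - j))]
    exact hid.symm
  have hkey : (m : ℝ) / (T.card : ℝ) = ((k - j).choose ρ : ℝ) / ((n - j).choose ρ : ℝ) := by
    have hTc0 : (((n - j).choose (k - j) : ℕ) : ℝ) ≠ 0 :=
      Nat.cast_ne_zero.mpr (Nat.choose_pos (by omega : k - j ≤ n - j)).ne'
    rw [hTcard, div_eq_div_iff hTc0 (ne_of_gt hDpos)]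
    exact_mod_cast hnat
  rw [← hkey, mul_div_assoc]
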